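/- arXiv:2001.06314 — 2 statements merged into one kernel-verified Lean document; each statement's English description precedes it below -/
import Mathlib

section
/- In ℍ¹, at every point with x² + y² ≠ 0: Δ_{ℍ¹}θ = 0, Δ_{ℍ¹}ρ = 3(x²+y²)/ρ³, and Δ_{ℍ¹}φ = 4cos(φ)/ρ², where ρ = ((x²+y²)²+t²)^{1/4}, φ = arccos(t/ρ²), θ = arctan(y/x). -/
/-- The first Heisenberg group `ℍ¹` as `ℝ³`. -/
abbrev H1 := ℝ × ℝ × ℝ

/-- The vector field `X = ∂_x + 2y ∂_t`. -/
noncomputable def Xd (u : H1 → ℝ) (p : H1) : ℝ := fderiv ℝ u p (1, 0, 2 * p.2.1)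

/-- The vector field `Y = ∂_y − 2x ∂_t`. -/
noncomputable def Yd (u : H1 → ℝ) (p : H1) : ℝ := fderiv ℝ u p (0, 1, -(2 * p.1))

/-- Horizontal gradient `∇_{ℍ¹} u = (Xu, Yu)`. -/
noncomputable def gradH (u : H1 → ℝ) (p : H1) : ℝ × ℝ := (Xd u p, Yd u p)

/-- Kohn Laplacian `Δ_{ℍ¹} = X² + Y²`. -/
noncomputable def lapH (u : H1 → ℝ) (p : H1) : ℝ := Xd (Xd u) p + Yd (Yd u) p

/-- Koranyi gauge `ρ`. -/
noncomputable def rhoH (p : H1) : ℝ := ((p.1^2 + p.2.1^2)^2 + p.2.2^2) ^ ((1:ℝ)/4)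

/-- Angular coordinate `θ = arctan (y/x)`. -/
noncomputable def thetaH (p : H1) : ℝ := Real.arctan (p.2.1 / p.1)

/-- Angular coordinate `φ = arccos (t/ρ²)`. -/
noncomputable def phiH (p : H1) : ℝ := Real.arccos (p.2.2 / (rhoH p)^2)

open Real

section helpers
variable {f g : H1 → ℝ} {f' g' : H1 →L[ℝ] ℝ} {q : H1}
lemma myPow (hf : HasFDerivAt f f' q) (n : ℕ) :
    HasFDerivAt (fun x => f x ^ n) (((n : ℝ) * f q ^ (n - 1)) • f') q := by
  simpa [Function.comp_def] using (hasDerivAt_pow n (f q)).comp_hasFDerivAt q hf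
lemma myInv (hf : HasFDerivAt f f' q) (h : f q ≠ 0) :
    HasFDerivAt (fun x => (f x)⁻¹) (-((f q ^ 2)⁻¹ • f')) q := by
  simpa [Function.comp_def] using (hasDerivAt_inv h).comp_hasFDerivAt q hf
lemma myDiv (hf : HasFDerivAt f f' q) (hg : HasFDerivAt g g' q) (h : g q ≠ 0) :
    HasFDerivAt (fun x => f x / g x)
      (-((f q * (g q ^ 2)⁻¹) • g') + (g q)⁻¹ • f') q := by
  simpa [div_eq_mul_inv, smul_smul, Pi.mul_def] using hf.mul (myInv hg h)
lemma hasF_x : HasFDerivAt (fun q : H1 => q.1)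
    (ContinuousLinearMap.fst ℝ ℝ (ℝ × ℝ)) q := hasFDerivAt_fst
lemma hasF_y : HasFDerivAt (fun q : H1 => q.2.1)
    ((ContinuousLinearMap.fst ℝ ℝ ℝ).comp (ContinuousLinearMap.snd ℝ ℝ (ℝ × ℝ))) q :=
  hasFDerivAt_fst.comp q hasFDerivAt_snd
lemma hasF_t : HasFDerivAt (fun q : H1 => q.2.2)
    ((ContinuousLinearMap.snd ℝ ℝ ℝ).comp (ContinuousLinearMap.snd ℝ ℝ (ℝ × ℝ))) q :=
  hasFDerivAt_snd.comp q hasFDerivAt_snd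
end helpers

lemma Npow' {N : ℝ} (hN : 0 < N) : N ^ ((4:ℝ)⁻¹ - 1) = N ^ ((1:ℝ)/4) / N := by
  rw [Real.rpow_sub hN, Real.rpow_one]; norm_num

lemma Nf_pos {q : H1} (hr : q.1^2 + q.2.1^2 ≠ 0) : 0 < (q.1^2 + q.2.1^2)^2 + q.2.2^2 := by
  have : 0 < (q.1^2 + q.2.1^2)^2 := by positivity
  positivity

lemma rho_pos {q : H1} (hr : q.1^2 + q.2.1^2 ≠ 0) : 0 < rhoH q :=
  Real.rpow_pos_of_pos (Nf_pos hr) _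

lemma rho4 {q : H1} (hr : q.1^2 + q.2.1^2 ≠ 0) :
    rhoH q ^ 4 = (q.1^2 + q.2.1^2)^2 + q.2.2^2 := by
  rw [rhoH, ← Real.rpow_natCast (((q.1^2 + q.2.1^2)^2 + q.2.2^2) ^ ((1:ℝ)/4)) 4,
    ← Real.rpow_mul (Nf_pos hr).le]
  norm_num

lemma cos_lt {q : H1} (hr : q.1^2 + q.2.1^2 ≠ 0) : (q.2.2 / rhoH q ^ 2)^2 < 1 := by
  have hR := rho_pos hr
  have h4 := rho4 hr
  have hr2 : 0 < (q.1^2 + q.2.1^2)^2 := by positivity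
  rw [div_pow, div_lt_one (by positivity)]
  nlinarith [h4]

lemma sqrt_c {q : H1} (hr : q.1^2 + q.2.1^2 ≠ 0) :
    Real.sqrt (1 - (q.2.2 / rhoH q ^ 2)^2) = (q.1^2 + q.2.1^2) / rhoH q ^ 2 := by
  have hR := rho_pos hr
  have h4 := rho4 hr
  rw [show 1 - (q.2.2 / rhoH q ^ 2)^2 = ((q.1^2 + q.2.1^2) / rhoH q ^ 2)^2 by
    field_simp
    linear_combination h4]
  exact Real.sqrt_sq (by positivity)

lemma phi_first {q : H1} (hr : q.1^2 + q.2.1^2 ≠ 0) :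
    Xd phiH q = -(2*(q.2.1 * (q.1^2 + q.2.1^2) - q.1 * q.2.2))
        / ((q.1^2 + q.2.1^2)^2 + q.2.2^2) ∧
    Yd phiH q = 2*(q.1 * (q.1^2 + q.2.1^2) + q.2.1 * q.2.2)
        / ((q.1^2 + q.2.1^2)^2 + q.2.2^2) := by
  have hN := Nf_pos hr
  have hR := rho_pos hr
  have hR2 : rhoH q ^ 2 ≠ 0 := by positivity
  have hNd : HasFDerivAt (fun q : H1 => (q.1^2 + q.2.1^2)^2 + q.2.2^2) _ q :=
    (myPow ((myPow hasF_x 2).add (myPow hasF_y 2)) 2).add (myPow hasF_t 2)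
  have hρ : HasFDerivAt rhoH _ q := HasFDerivAt.rpow_const hNd (Or.inl hN.ne')
  have hc : HasFDerivAt (fun q : H1 => q.2.2 / rhoH q ^ 2) _ q :=
    myDiv hasF_t (myPow hρ 2) hR2
  have hlt := cos_lt hr
  have hne1 : q.2.2 / rhoH q ^ 2 ≠ -1 := by intro h; rw [h] at hlt; norm_num at hlt
  have hne2 : q.2.2 / rhoH q ^ 2 ≠ 1 := by intro h; rw [h] at hlt; norm_num at hlt
  have h : HasFDerivAt phiH _ q :=
    (Real.hasDerivAt_arccos hne1 hne2).comp_hasFDerivAt q hc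
  constructor
  · rw [Xd, h.fderiv]; simp
    rw [sqrt_c hr, Npow' hN]
    rw [show ((q.1^2 + q.2.1^2)^2 + q.2.2^2) ^ ((1:ℝ)/4) = rhoH q from rfl]
    field_simp
    ring
  · rw [Yd, h.fderiv]; simp
    rw [sqrt_c hr, Npow' hN]
    rw [show ((q.1^2 + q.2.1^2)^2 + q.2.2^2) ^ ((1:ℝ)/4) = rhoH q from rfl]
    field_simp
    ring


lemma theta_first {q : H1} (hx0 : q.1 ≠ 0) :
    Xd thetaH q = -q.2.1 / (q.1^2 + q.2.1^2) ∧ Yd thetaH q = q.1 / (q.1^2 + q.2.1^2) := by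
  have hc : HasFDerivAt (fun q : H1 => q.2.1 / q.1) _ q := myDiv hasF_y hasF_x hx0
  have h : HasFDerivAt thetaH _ q :=
    (Real.hasDerivAt_arctan (q.2.1 / q.1)).comp_hasFDerivAt q hc
  have hr : q.1^2 + q.2.1^2 ≠ 0 := by positivity
  constructor
  · rw [Xd, h.fderiv]; simp; field_simp
  · rw [Yd, h.fderiv]; simp; field_simp


lemma rho_first {q : H1} (hr : q.1^2 + q.2.1^2 ≠ 0) :
    Xd rhoH q = (q.1 * (q.1^2 + q.2.1^2) + q.2.1 * q.2.2) * rhoH q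
        / ((q.1^2 + q.2.1^2)^2 + q.2.2^2) ∧
    Yd rhoH q = (q.2.1 * (q.1^2 + q.2.1^2) - q.1 * q.2.2) * rhoH q
        / ((q.1^2 + q.2.1^2)^2 + q.2.2^2) := by
  have hNd : HasFDerivAt (fun q : H1 => (q.1^2 + q.2.1^2)^2 + q.2.2^2) _ q :=
    (myPow ((myPow hasF_x 2).add (myPow hasF_y 2)) 2).add (myPow hasF_t 2)
  have h : HasFDerivAt rhoH _ q := HasFDerivAt.rpow_const hNd (Or.inl (Nf_pos hr).ne')
  have hN := Nf_pos hr
  constructor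
  · rw [Xd, h.fderiv]; simp; rw [Npow' hN]
    rw [show ((q.1^2 + q.2.1^2)^2 + q.2.2^2) ^ ((1:ℝ)/4) = rhoH q from rfl]
    field_simp; ring
  · rw [Yd, h.fderiv]; simp; rw [Npow' hN]
    rw [show ((q.1^2 + q.2.1^2)^2 + q.2.2^2) ^ ((1:ℝ)/4) = rhoH q from rfl]
    field_simp; ring


set_option maxHeartbeats 4000000 in
theorem polar_sublaplacians (p : H1) (hxy : p.1^2 + p.2.1^2 ≠ 0) :
    (p.1 ≠ 0 → lapH thetaH p = 0) ∧
    lapH rhoH p = 3 * (p.1^2 + p.2.1^2) / (rhoH p)^3 ∧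
    lapH phiH p = 4 * Real.cos (phiH p) / (rhoH p)^2 := by
  have hrC : ContinuousAt (fun q : H1 => q.1^2 + q.2.1^2) p := by fun_prop
  have hre : ∀ᶠ q in nhds p, q.1^2 + q.2.1^2 ≠ 0 := hrC.eventually_ne hxy
  have hN := Nf_pos hxy
  have hR := rho_pos hxy
  have h4 := rho4 hxy
  have hNd : HasFDerivAt (fun q : H1 => (q.1^2 + q.2.1^2)^2 + q.2.2^2) _ p :=
    (myPow ((myPow hasF_x 2).add (myPow hasF_y 2)) 2).add (myPow hasF_t 2)
  have hρ : HasFDerivAt rhoH _ p := HasFDerivAt.rpow_const hNd (Or.inl hN.ne')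
  refine ⟨?_, ?_, ?_⟩
  · intro hx
    have hxe : ∀ᶠ q in nhds p, q.1 ≠ 0 := (continuousAt_fst).eventually_ne hx
    have e1 : Xd thetaH =ᶠ[nhds p] (fun q => -q.2.1 / (q.1^2 + q.2.1^2)) :=
      hxe.mono fun q hq => (theta_first hq).1
    have e2 : Yd thetaH =ᶠ[nhds p] (fun q => q.1 / (q.1^2 + q.2.1^2)) :=
      hxe.mono fun q hq => (theta_first hq).2
    have hg1 : HasFDerivAt (fun q : H1 => -q.2.1 / (q.1^2 + q.2.1^2)) _ p :=
      myDiv hasF_y.neg ((myPow hasF_x 2).add (myPow hasF_y 2)) hxy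
    have hg2 : HasFDerivAt (fun q : H1 => q.1 / (q.1^2 + q.2.1^2)) _ p :=
      myDiv hasF_x ((myPow hasF_x 2).add (myPow hasF_y 2)) hxy
    rw [lapH, Xd, Yd, e1.fderiv_eq, e2.fderiv_eq, hg1.fderiv, hg2.fderiv]
    simp
    field_simp
    ring
  · have e1 : Xd rhoH =ᶠ[nhds p] (fun q =>
        (q.1 * (q.1^2 + q.2.1^2) + q.2.1 * q.2.2) * rhoH q / ((q.1^2 + q.2.1^2)^2 + q.2.2^2)) :=
      hre.mono fun q hq => (rho_first hq).1
    have e2 : Yd rhoH =ᶠ[nhds p] (fun q =>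
        (q.2.1 * (q.1^2 + q.2.1^2) - q.1 * q.2.2) * rhoH q / ((q.1^2 + q.2.1^2)^2 + q.2.2^2)) :=
      hre.mono fun q hq => (rho_first hq).2
    have hA : HasFDerivAt (fun q : H1 => q.1 * (q.1^2 + q.2.1^2) + q.2.1 * q.2.2) _ p :=
      (hasF_x.mul ((myPow hasF_x 2).add (myPow hasF_y 2))).add (hasF_y.mul hasF_t)
    have hB : HasFDerivAt (fun q : H1 => q.2.1 * (q.1^2 + q.2.1^2) - q.1 * q.2.2) _ p :=
      (hasF_y.mul ((myPow hasF_x 2).add (myPow hasF_y 2))).sub (hasF_x.mul hasF_t)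
    have hg1 : HasFDerivAt (fun q : H1 =>
        (q.1 * (q.1^2 + q.2.1^2) + q.2.1 * q.2.2) * rhoH q / ((q.1^2 + q.2.1^2)^2 + q.2.2^2)) _ p :=
      myDiv (hA.mul hρ) hNd hN.ne'
    have hg2 : HasFDerivAt (fun q : H1 =>
        (q.2.1 * (q.1^2 + q.2.1^2) - q.1 * q.2.2) * rhoH q / ((q.1^2 + q.2.1^2)^2 + q.2.2^2)) _ p :=
      myDiv (hB.mul hρ) hNd hN.ne'
    rw [lapH, Xd, Yd, e1.fderiv_eq, e2.fderiv_eq, hg1.fderiv, hg2.fderiv]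
    simp
    rw [Npow' hN]
    rw [show ((p.1^2 + p.2.1^2)^2 + p.2.2^2) ^ ((1:ℝ)/4) = rhoH p from rfl]
    rw [show (3:ℝ) * (p.1^2 + p.2.1^2) / rhoH p ^ 3
        = 3 * (p.1^2 + p.2.1^2) * rhoH p / ((p.1^2 + p.2.1^2)^2 + p.2.2^2) by
      rw [← h4]; field_simp]
    field_simp
    ring
  · have e1 : Xd phiH =ᶠ[nhds p] (fun q =>
        -(2*(q.2.1 * (q.1^2 + q.2.1^2) - q.1 * q.2.2)) / ((q.1^2 + q.2.1^2)^2 + q.2.2^2)) :=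
      hre.mono fun q hq => (phi_first hq).1
    have e2 : Yd phiH =ᶠ[nhds p] (fun q =>
        2*(q.1 * (q.1^2 + q.2.1^2) + q.2.1 * q.2.2) / ((q.1^2 + q.2.1^2)^2 + q.2.2^2)) :=
      hre.mono fun q hq => (phi_first hq).2
    have hA : HasFDerivAt (fun q : H1 => 2*(q.1 * (q.1^2 + q.2.1^2) + q.2.1 * q.2.2)) _ p :=
      ((hasF_x.mul ((myPow hasF_x 2).add (myPow hasF_y 2))).add (hasF_y.mul hasF_t)).const_mul 2
    have hB : HasFDerivAt (fun q : H1 => -(2*(q.2.1 * (q.1^2 + q.2.1^2) - q.1 * q.2.2))) _ p :=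
      (((hasF_y.mul ((myPow hasF_x 2).add (myPow hasF_y 2))).sub (hasF_x.mul hasF_t)).const_mul 2).neg
    have hg1 : HasFDerivAt (fun q : H1 =>
        -(2*(q.2.1 * (q.1^2 + q.2.1^2) - q.1 * q.2.2)) / ((q.1^2 + q.2.1^2)^2 + q.2.2^2)) _ p :=
      myDiv hB hNd hN.ne'
    have hg2 : HasFDerivAt (fun q : H1 =>
        2*(q.1 * (q.1^2 + q.2.1^2) + q.2.1 * q.2.2) / ((q.1^2 + q.2.1^2)^2 + q.2.2^2)) _ p :=
      myDiv hA hNd hN.ne'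
    have hlt := cos_lt hxy
    have hb1 : (-1:ℝ) ≤ p.2.2 / rhoH p ^ 2 := by nlinarith [hlt]
    have hb2 : p.2.2 / rhoH p ^ 2 ≤ 1 := by nlinarith [hlt]
    rw [lapH, Xd, Yd, e1.fderiv_eq, e2.fderiv_eq, hg1.fderiv, hg2.fderiv]
    rw [phiH, Real.cos_arccos hb1 hb2]
    simp
    rw [show (4:ℝ) * (p.2.2 / rhoH p ^ 2) / rhoH p ^ 2
        = 4 * p.2.2 / ((p.1^2 + p.2.1^2)^2 + p.2.2^2) by
      rw [← h4]; ring]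
    field_simp
    ring
end

section
/- In ℍ¹, if u = ρ^α f(φ) in the polar coordinates ρ = ((x²+y²)²+t²)^{1/4}, φ = arccos(t/ρ²), with f ∈ C², then Δ_{ℍ¹}u = ρ^{α−2}( α(α+2)(sin φ)f(φ) + 4·d/dφ( sin φ · f'(φ) ) ) at points with x²+y² ≠ 0. -/
open Real

noncomputable def wf (q : H1) : ℝ := (q.1^2 + q.2.1^2)^2 + q.2.2^2
noncomputable def Af (q : H1) : ℝ := (q.1^2+q.2.1^2)*q.1 + q.2.2*q.2.1
noncomputable def Bf (q : H1) : ℝ := (q.1^2+q.2.1^2)*q.2.1 - q.2.2*q.1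
noncomputable def Phi (q : H1) : ℝ := Real.arccos (q.2.2 * wf q ^ (-(1:ℝ)/2))

lemma wf_nonneg (q : H1) : 0 ≤ wf q := by unfold wf; positivity

lemma rhoH_rpow (q : H1) (e : ℝ) : rhoH q ^ e = wf q ^ (e/4) := by
  have h : rhoH q = wf q ^ ((1:ℝ)/4) := rfl
  rw [h, ← Real.rpow_mul (wf_nonneg q)]
  norm_num
  ring_nf

lemma phiH_eq (q : H1) : phiH q = Phi q := by
  unfold phiH Phi
  congr 1
  rw [← Real.rpow_natCast (rhoH q) 2, rhoH_rpow,
    show ((2:ℕ):ℝ)/4 = (1:ℝ)/2 by norm_num,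
    show (-(1:ℝ)/2) = -((1:ℝ)/2) by norm_num,
    Real.rpow_neg (wf_nonneg q), div_eq_mul_inv]

lemma xd_gen (β k : ℝ) (g0 g1 g2 : ℝ → ℝ) (d0 d1 d2 : ℝ) (q : H1) (hq : q.1^2+q.2.1^2 ≠ 0)
    (h0 : HasDerivAt g0 d0 (Phi q)) (h1 : HasDerivAt g1 d1 (Phi q))
    (h2 : HasDerivAt g2 d2 (Phi q)) :
    Xd (fun q => wf q ^ β * (k * g0 (Phi q) + Af q * g1 (Phi q) + Bf q * g2 (Phi q))) q
    = wf q ^ (β-1) * (4*β*Af q*(k * g0 (Phi q) + Af q * g1 (Phi q) + Bf q * g2 (Phi q))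
       + 3*(q.1^2+q.2.1^2)*wf q*g1 (Phi q) - q.2.2*wf q*g2 (Phi q)
       - 2*Bf q*(k*d0 + Af q*d1 + Bf q*d2)) := by
  have hr2 : 0 < q.1^2+q.2.1^2 := lt_of_le_of_ne (by positivity) (Ne.symm hq)
  have hw : 0 < wf q := by unfold wf; positivity
  set S := wf q ^ ((1:ℝ)/2) with hSdef
  have hS : 0 < S := rpow_pos_of_pos hw _
  have hSS : S * S = wf q := by rw [hSdef, ← rpow_add hw]; norm_num
  have ht2 : q.2.2^2 < wf q := by unfold wf at *; nlinarith
  have hSinv : wf q ^ (-(1:ℝ)/2) = S⁻¹ := by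
    rw [hSdef, ← rpow_neg hw.le]; norm_num
  have hc : q.2.2 * wf q ^ (-(1:ℝ)/2) = q.2.2 / S := by rw [hSinv, div_eq_mul_inv]
  have hc1 : q.2.2 * wf q ^ (-(1:ℝ)/2) ≠ 1 := by
    rw [hc]; intro h; rw [div_eq_one_iff_eq hS.ne'] at h; rw [h] at ht2; nlinarith [hSS]
  have hc2 : q.2.2 * wf q ^ (-(1:ℝ)/2) ≠ -1 := by
    rw [hc]; intro h; rw [div_eq_iff hS.ne'] at h; rw [h] at ht2; nlinarith [hSS]
  have hsq : √(1 - (q.2.2 * wf q ^ (-(1:ℝ)/2))^2) = (q.1^2+q.2.1^2)/S := by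
    rw [hc, show 1 - (q.2.2/S)^2 = ((q.1^2+q.2.1^2)/S)^2 by
      field_simp
      rw [show S^2 = S*S from sq S, hSS]; unfold wf; ring]
    exact Real.sqrt_sq (by positivity)
  have hx : HasFDerivAt (fun q : H1 => q.1) (ContinuousLinearMap.fst ℝ ℝ (ℝ×ℝ)) q := hasFDerivAt_fst
  have hy := (hasFDerivAt_snd (𝕜:=ℝ) (E:=ℝ) (F:=ℝ×ℝ) (p:=q)).fst
  have ht := (hasFDerivAt_snd (𝕜:=ℝ) (E:=ℝ) (F:=ℝ×ℝ) (p:=q)).snd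
  have hx2 := (hasDerivAt_pow 2 q.1).comp_hasFDerivAt q hx
  have hy2 := (hasDerivAt_pow 2 q.2.1).comp_hasFDerivAt q hy
  have hr2' := hx2.add hy2
  have hr4 := (hasDerivAt_pow 2 (q.1^2+q.2.1^2)).comp_hasFDerivAt q hr2'
  have ht2' := (hasDerivAt_pow 2 q.2.2).comp_hasFDerivAt q ht
  have hwD : HasFDerivAt wf _ q := hr4.add ht2'
  have hwb := hwD.rpow_const (p := β) (Or.inl hw.ne')
  have hwn := hwD.rpow_const (p := -(1:ℝ)/2) (Or.inl hw.ne')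
  have hcD := ht.mul hwn
  have hphi : HasFDerivAt Phi _ q := (Real.hasDerivAt_arccos hc2 hc1).comp_hasFDerivAt q hcD
  have h0D := h0.comp_hasFDerivAt q hphi
  have h1D := h1.comp_hasFDerivAt q hphi
  have h2D := h2.comp_hasFDerivAt q hphi
  have hAD : HasFDerivAt Af _ q := (hr2'.mul hx).add (ht.mul hy)
  have hBD : HasFDerivAt Bf _ q := (hr2'.mul hy).sub (ht.mul hx)
  have hu := hwb.mul ((((hasFDerivAt_const k q).mul h0D).add (hAD.mul h1D)).add (hBD.mul h2D))
  have hD : fderiv ℝ (fun q : H1 => wf q ^ β * (k * g0 (Phi q) + Af q * g1 (Phi q) + Bf q * g2 (Phi q))) q = _ := hu.fderiv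
  unfold Xd
  rw [hD]
  simp only [ContinuousLinearMap.add_apply, ContinuousLinearMap.smul_apply,
    ContinuousLinearMap.comp_apply, ContinuousLinearMap.coe_fst', ContinuousLinearMap.coe_snd',
    ContinuousLinearMap.sub_apply, ContinuousLinearMap.zero_apply,
    smul_eq_mul, Function.comp_apply, hsq, hSinv]
  norm_num
  have hsq' : √(1 - (q.2.2 * S⁻¹) ^ 2) = (q.1^2+q.2.1^2)/S := by
    rw [show q.2.2 * S⁻¹ = q.2.2 / S from (div_eq_mul_inv _ _).symm,
      show 1 - (q.2.2/S)^2 = ((q.1^2+q.2.1^2)/S)^2 by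
        field_simp
        rw [show S^2 = S*S from sq S, hSS]; unfold wf; ring]
    exact Real.sqrt_sq (by positivity)
  have h32 : wf q ^ ((-(3/2)):ℝ) = (S * wf q)⁻¹ := by
    rw [show ((-(3/2)):ℝ) = (-(1:ℝ)/2) + (-1) by norm_num, rpow_add hw, hSinv, rpow_neg_one,
      mul_inv]
  have hβ : wf q ^ β = wf q ^ (β-1) * wf q := by
    rw [← rpow_add_one hw.ne']; ring_nf
  rw [show wf q ^ (-(3/2) : ℝ) = (S * wf q)⁻¹ from h32, hsq', hβ]
  field_simp
  unfold wf Af Bf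
  ring

lemma yd_gen (β k : ℝ) (g0 g1 g2 : ℝ → ℝ) (d0 d1 d2 : ℝ) (q : H1) (hq : q.1^2+q.2.1^2 ≠ 0)
    (h0 : HasDerivAt g0 d0 (Phi q)) (h1 : HasDerivAt g1 d1 (Phi q))
    (h2 : HasDerivAt g2 d2 (Phi q)) :
    Yd (fun q => wf q ^ β * (k * g0 (Phi q) + Af q * g1 (Phi q) + Bf q * g2 (Phi q))) q
    = wf q ^ (β-1) * (4*β*Bf q*(k * g0 (Phi q) + Af q * g1 (Phi q) + Bf q * g2 (Phi q))
       + q.2.2*wf q*g1 (Phi q) + 3*(q.1^2+q.2.1^2)*wf q*g2 (Phi q)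
       + 2*Af q*(k*d0 + Af q*d1 + Bf q*d2)) := by
  have hr2 : 0 < q.1^2+q.2.1^2 := lt_of_le_of_ne (by positivity) (Ne.symm hq)
  have hw : 0 < wf q := by unfold wf; positivity
  set S := wf q ^ ((1:ℝ)/2) with hSdef
  have hS : 0 < S := rpow_pos_of_pos hw _
  have hSS : S * S = wf q := by rw [hSdef, ← rpow_add hw]; norm_num
  have ht2 : q.2.2^2 < wf q := by unfold wf at *; nlinarith
  have hSinv : wf q ^ (-(1:ℝ)/2) = S⁻¹ := by
    rw [hSdef, ← rpow_neg hw.le]; norm_num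
  have hc : q.2.2 * wf q ^ (-(1:ℝ)/2) = q.2.2 / S := by rw [hSinv, div_eq_mul_inv]
  have hc1 : q.2.2 * wf q ^ (-(1:ℝ)/2) ≠ 1 := by
    rw [hc]; intro h; rw [div_eq_one_iff_eq hS.ne'] at h; rw [h] at ht2; nlinarith [hSS]
  have hc2 : q.2.2 * wf q ^ (-(1:ℝ)/2) ≠ -1 := by
    rw [hc]; intro h; rw [div_eq_iff hS.ne'] at h; rw [h] at ht2; nlinarith [hSS]
  have hsq : √(1 - (q.2.2 * wf q ^ (-(1:ℝ)/2))^2) = (q.1^2+q.2.1^2)/S := by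
    rw [hc, show 1 - (q.2.2/S)^2 = ((q.1^2+q.2.1^2)/S)^2 by
      field_simp
      rw [show S^2 = S*S from sq S, hSS]; unfold wf; ring]
    exact Real.sqrt_sq (by positivity)
  have hx : HasFDerivAt (fun q : H1 => q.1) (ContinuousLinearMap.fst ℝ ℝ (ℝ×ℝ)) q := hasFDerivAt_fst
  have hy := (hasFDerivAt_snd (𝕜:=ℝ) (E:=ℝ) (F:=ℝ×ℝ) (p:=q)).fst
  have ht := (hasFDerivAt_snd (𝕜:=ℝ) (E:=ℝ) (F:=ℝ×ℝ) (p:=q)).snd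
  have hx2 := (hasDerivAt_pow 2 q.1).comp_hasFDerivAt q hx
  have hy2 := (hasDerivAt_pow 2 q.2.1).comp_hasFDerivAt q hy
  have hr2' := hx2.add hy2
  have hr4 := (hasDerivAt_pow 2 (q.1^2+q.2.1^2)).comp_hasFDerivAt q hr2'
  have ht2' := (hasDerivAt_pow 2 q.2.2).comp_hasFDerivAt q ht
  have hwD : HasFDerivAt wf _ q := hr4.add ht2'
  have hwb := hwD.rpow_const (p := β) (Or.inl hw.ne')
  have hwn := hwD.rpow_const (p := -(1:ℝ)/2) (Or.inl hw.ne')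
  have hcD := ht.mul hwn
  have hphi : HasFDerivAt Phi _ q := (Real.hasDerivAt_arccos hc2 hc1).comp_hasFDerivAt q hcD
  have h0D := h0.comp_hasFDerivAt q hphi
  have h1D := h1.comp_hasFDerivAt q hphi
  have h2D := h2.comp_hasFDerivAt q hphi
  have hAD : HasFDerivAt Af _ q := (hr2'.mul hx).add (ht.mul hy)
  have hBD : HasFDerivAt Bf _ q := (hr2'.mul hy).sub (ht.mul hx)
  have hu := hwb.mul ((((hasFDerivAt_const k q).mul h0D).add (hAD.mul h1D)).add (hBD.mul h2D))
  have hD : fderiv ℝ (fun q : H1 => wf q ^ β * (k * g0 (Phi q) + Af q * g1 (Phi q) + Bf q * g2 (Phi q))) q = _ := hu.fderiv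
  unfold Yd
  rw [hD]
  simp only [ContinuousLinearMap.add_apply, ContinuousLinearMap.smul_apply,
    ContinuousLinearMap.comp_apply, ContinuousLinearMap.coe_fst', ContinuousLinearMap.coe_snd',
    ContinuousLinearMap.sub_apply, ContinuousLinearMap.zero_apply,
    smul_eq_mul, Function.comp_apply, hsq, hSinv]
  norm_num
  have hsq' : √(1 - (q.2.2 * S⁻¹) ^ 2) = (q.1^2+q.2.1^2)/S := by
    rw [show q.2.2 * S⁻¹ = q.2.2 / S from (div_eq_mul_inv _ _).symm,
      show 1 - (q.2.2/S)^2 = ((q.1^2+q.2.1^2)/S)^2 by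
        field_simp
        rw [show S^2 = S*S from sq S, hSS]; unfold wf; ring]
    exact Real.sqrt_sq (by positivity)
  have h32 : wf q ^ ((-(3/2)):ℝ) = (S * wf q)⁻¹ := by
    rw [show ((-(3/2)):ℝ) = (-(1:ℝ)/2) + (-1) by norm_num, rpow_add hw, hSinv, rpow_neg_one,
      mul_inv]
  have hβ : wf q ^ β = wf q ^ (β-1) * wf q := by
    rw [← rpow_add_one hw.ne']; ring_nf
  rw [show wf q ^ (-(3/2) : ℝ) = (S * wf q)⁻¹ from h32, hsq', hβ]
  field_simp
  unfold wf Af Bf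
  ring


set_option maxHeartbeats 1000000 in
theorem sublaplacian_homogeneous_axial (α : ℝ) (f : ℝ → ℝ) (hf : ContDiff ℝ 2 f)
    (p : H1) (hxy : p.1^2 + p.2.1^2 ≠ 0) :
    lapH (fun q => rhoH q ^ α * f (phiH q)) p =
      rhoH p ^ (α - 2) *
        (α * (α + 2) * Real.sin (phiH p) * f (phiH p) +
          4 * deriv (fun s => Real.sin s * deriv f s) (phiH p)) := by
  have hf' : ContDiff ℝ ((1:WithTop ℕ∞)+1) f := by
    norm_num; exact hf
  have hf1 : Differentiable ℝ f := hf.differentiable (by norm_num)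
  have hdf : Differentiable ℝ (deriv f) :=
    ((contDiff_succ_iff_deriv.mp hf').2.2).differentiable one_ne_zero
  -- canonical shape of u
  set u' : H1 → ℝ := fun q => wf q ^ (α/4) *
      ((1:ℝ) * f (Phi q) + Af q * (fun _ : ℝ => (0:ℝ)) (Phi q)
        + Bf q * (fun _ : ℝ => (0:ℝ)) (Phi q)) with hu'def
  have huf : (fun q => rhoH q ^ α * f (phiH q)) = u' := by
    funext q
    rw [hu'def]
    simp only [phiH_eq, rhoH_rpow]
    ring_nf
  -- first derivatives
  set XU : H1 → ℝ := fun q => wf q ^ (α/4 - 1) *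
      ((0:ℝ) * f (Phi q) + Af q * (fun s => α * f s) (Phi q)
        + Bf q * (fun s => -2 * deriv f s) (Phi q)) with hXUdef
  set YU : H1 → ℝ := fun q => wf q ^ (α/4 - 1) *
      ((0:ℝ) * f (Phi q) + Af q * (fun s => 2 * deriv f s) (Phi q)
        + Bf q * (fun s => α * f s) (Phi q)) with hYUdef
  have hXU : ∀ q : H1, q.1^2+q.2.1^2 ≠ 0 → Xd u' q = XU q := by
    intro q hq
    rw [hu'def, xd_gen (α/4) 1 f (fun _ => (0:ℝ)) (fun _ => (0:ℝ))
      (deriv f (Phi q)) 0 0 q hq ((hf1 _).hasDerivAt)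
      (hasDerivAt_const _ _) (hasDerivAt_const _ _), hXUdef]
    simp only []
    ring
  have hYU : ∀ q : H1, q.1^2+q.2.1^2 ≠ 0 → Yd u' q = YU q := by
    intro q hq
    rw [hu'def, yd_gen (α/4) 1 f (fun _ => (0:ℝ)) (fun _ => (0:ℝ))
      (deriv f (Phi q)) 0 0 q hq ((hf1 _).hasDerivAt)
      (hasDerivAt_const _ _) (hasDerivAt_const _ _), hYUdef]
    simp only []
    ring
  -- neighborhood equality
  have hUopen : IsOpen {q : H1 | q.1^2+q.2.1^2 ≠ 0} := by
    have hc : Continuous fun q : H1 => q.1^2+q.2.1^2 := by fun_prop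
    exact isOpen_compl_singleton.preimage hc
  have hmem : {q : H1 | q.1^2+q.2.1^2 ≠ 0} ∈ nhds p := hUopen.mem_nhds hxy
  have hXev : Xd u' =ᶠ[nhds p] XU := Filter.eventuallyEq_of_mem hmem (fun q hq => hXU q hq)
  have hYev : Yd u' =ᶠ[nhds p] YU := Filter.eventuallyEq_of_mem hmem (fun q hq => hYU q hq)
  have hXX : Xd (Xd u') p = Xd XU p := by
    show fderiv ℝ (Xd u') p _ = fderiv ℝ XU p _
    rw [hXev.fderiv_eq]
  have hYY : Yd (Yd u') p = Yd YU p := by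
    show fderiv ℝ (Yd u') p _ = fderiv ℝ YU p _
    rw [hYev.fderiv_eq]
  -- second derivatives
  have hd1 : HasDerivAt (fun s => α * f s) (α * deriv f (Phi p)) (Phi p) :=
    ((hf1 _).hasDerivAt).const_mul α
  have hd2 : HasDerivAt (fun s => -2 * deriv f s) (-2 * deriv (deriv f) (Phi p)) (Phi p) :=
    ((hdf _).hasDerivAt).const_mul (-2)
  have hd3 : HasDerivAt (fun s => 2 * deriv f s) (2 * deriv (deriv f) (Phi p)) (Phi p) :=
    ((hdf _).hasDerivAt).const_mul 2
  have h2X := xd_gen (α/4 - 1) 0 f (fun s => α * f s) (fun s => -2 * deriv f s)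
    (deriv f (Phi p)) (α * deriv f (Phi p)) (-2 * deriv (deriv f) (Phi p)) p hxy
    ((hf1 _).hasDerivAt) hd1 hd2
  have h2Y := yd_gen (α/4 - 1) 0 f (fun s => 2 * deriv f s) (fun s => α * f s)
    (deriv f (Phi p)) (2 * deriv (deriv f) (Phi p)) (α * deriv f (Phi p)) p hxy
    ((hf1 _).hasDerivAt) hd3 hd1
  rw [← hXUdef] at h2X
  rw [← hYUdef] at h2Y
  -- scalar facts at p
  have hr2 : 0 < p.1^2+p.2.1^2 := lt_of_le_of_ne (by positivity) (Ne.symm hxy)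
  have hw : 0 < wf p := by unfold wf; positivity
  set S := wf p ^ ((1:ℝ)/2) with hSdef
  have hS : 0 < S := rpow_pos_of_pos hw _
  have hSS : S * S = wf p := by rw [hSdef, ← rpow_add hw]; norm_num
  have ht2 : p.2.2^2 < wf p := by unfold wf at *; nlinarith
  have hSinv : wf p ^ (-(1:ℝ)/2) = S⁻¹ := by
    rw [hSdef, ← rpow_neg hw.le]; norm_num
  have habs : |p.2.2 / S| < 1 := by
    rw [abs_div, abs_of_pos hS, div_lt_one hS]
    rw [abs_lt]
    constructor <;> nlinarith [hSS, abs_nonneg p.2.2, sq_abs p.2.2]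
  have hsin : Real.sin (Phi p) = (p.1^2+p.2.1^2)/S := by
    unfold Phi
    rw [Real.sin_arccos, hSinv, ← div_eq_mul_inv,
      show 1 - (p.2.2/S)^2 = ((p.1^2+p.2.1^2)/S)^2 by
        field_simp
        rw [show S^2 = S*S from sq S, hSS]; unfold wf; ring]
    exact Real.sqrt_sq (by positivity)
  have hcos : Real.cos (Phi p) = p.2.2/S := by
    unfold Phi
    rw [hSinv, ← div_eq_mul_inv]
    exact Real.cos_arccos (abs_le.mp habs.le).1 (abs_le.mp habs.le).2
  have hderiv_prod : deriv (fun s => Real.sin s * deriv f s) (Phi p)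
      = Real.cos (Phi p) * deriv f (Phi p) + Real.sin (Phi p) * deriv (deriv f) (Phi p) := by
    rw [show (fun s => Real.sin s * deriv f s) = Real.sin * deriv f from rfl,
      deriv_mul (Real.differentiable_sin _) (hdf _), Real.deriv_sin]
  -- assemble
  rw [huf]
  unfold lapH
  rw [hXX, hYY, h2X, h2Y]
  rw [phiH_eq, rhoH_rpow, hderiv_prod, hsin, hcos]
  have hws : wf p * S = wf p ^ ((3:ℝ)/2) := by
    rw [show ((3:ℝ)/2) = 1 + 1/2 by norm_num, rpow_add hw, rpow_one, hSdef]
  rw [show wf p ^ ((α-2)/4) = wf p ^ (α/4 - 1 - 1) * (wf p * S) by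
    rw [hws, ← rpow_add hw]
    congr 1
    ring]
  field_simp
  unfold wf Af Bf
  ring
end
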